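/- Let L be a non-empty regular language with quotient DFA D and átomaton A. The map φ that assigns to each atom the set of its uncomplemented quotients is an NFA isomorphism between the átomaton A and D^{R D R} (the quotient DFA reversed, determinized, and reversed again): φ is a bijection between the state sets mapping initial states onto initial states, final states onto final states, and commuting with the transition functions. -/

import Mathlib

/-! Basic definitions: left quotients, atoms, and operations on finite automata. -/

/-- The left quotient of a language `L` by a word `w`: `w⁻¹L = {x | w ++ x ∈ L}`. -/
def leftQuot {α : Type} (L : Language α) (w : List α) : Language α := {x | w ++ x ∈ L}

/-- The set of all left quotients of `L`. -/
def quots {α : Type} (L : Language α) : Set (Language α) := {K | ∃ w : List α, K = leftQuot L w}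

/-- `A` is an atom of `L`: a non-empty intersection `K̃_0 ∩ ⋯ ∩ K̃_{n−1}` where each `K̃_i` is a
quotient `K_i` of `L` or its complement (`S` is the set of uncomplemented quotients, so a word is
in the intersection iff it belongs exactly to the quotients in `S`). -/
def IsAtomOf {α : Type} (L A : Language α) : Prop :=
  (∃ x, x ∈ A) ∧ ∃ S : Set (Language α), S ⊆ quots L ∧
    A = {x | ∀ K ∈ quots L, (x ∈ K ↔ K ∈ S)}

/-- A positive atom: at least one term of its defining intersection is uncomplemented,
equivalently the atom is contained in some quotient of `L`. -/
def IsPositiveAtomOf {α : Type} (L A : Language α) : Prop :=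
  IsAtomOf L A ∧ ∃ K ∈ quots L, ∀ x ∈ A, x ∈ K

namespace NFA

/-- The right language of a state `q`: words accepted starting from `q`. -/
def rightLang {α σ : Type} (M : NFA α σ) (q : σ) : Language α :=
  {w | ∃ p ∈ M.accept, p ∈ M.evalFrom {q} w}

/-- The left language of a state `q`: words leading from the initial states to `q`. -/
def leftLang {α σ : Type} (M : NFA α σ) (q : σ) : Language α :=
  {w | q ∈ M.eval w}

/-- An NFA is trim if every state has a non-empty left language and right language. -/
def IsTrim {α σ : Type} (M : NFA α σ) : Prop :=
  ∀ q, (∃ w, w ∈ M.leftLang q) ∧ (∃ w, w ∈ M.rightLang q)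

/-- An NFA is reduced if distinct states have distinct right languages. -/
def IsReduced {α σ : Type} (M : NFA α σ) : Prop :=
  ∀ q p, M.rightLang q = M.rightLang p → q = p

/-- An NFA is atomic if the right language of every state is a union of positive atoms of the
accepted language. -/
def IsAtomic {α σ : Type} (M : NFA α σ) : Prop :=
  ∀ q, ∃ 𝒜 : Set (Language α), (∀ A ∈ 𝒜, IsPositiveAtomOf M.accepts A) ∧
    M.rightLang q = {w | ∃ A ∈ 𝒜, w ∈ A}

/-- Reversal of an NFA: interchange initial and final states and reverse all transitions. -/
def rev {α σ : Type} (M : NFA α σ) : NFA α σ :=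
  ⟨fun q a => {p | q ∈ M.step p a}, M.accept, M.start⟩

/-- States of the determinization of an NFA: the subsets of states reachable from the initial
subset. -/
def detStates {α σ : Type} (M : NFA α σ) : Type := {S : Set σ // ∃ w, M.eval w = S}

instance {α σ : Type} [Finite σ] (M : NFA α σ) : Finite M.detStates :=
  Subtype.finite

/-- Determinization of an NFA by the subset construction, keeping only the subsets reachable
from the initial subset. -/
def det {α σ : Type} (M : NFA α σ) : DFA α M.detStates where
  step S a := ⟨M.stepSet S.1 a, by
    obtain ⟨w, hw⟩ := S.2
    exact ⟨w ++ [a], by rw [NFA.eval_append_singleton, hw]⟩⟩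
  start := ⟨M.start, [], rfl⟩
  accept := {S | ∃ p ∈ M.accept, p ∈ S.1}

end NFA

/-- Reversal of a DFA, yielding an NFA. -/
def DFA.rev {α σ : Type} (M : DFA α σ) : NFA α σ :=
  ⟨fun q a => {p | M.step p a = q}, M.accept, {M.start}⟩

/-- A DFA is minimal if no DFA accepting the same language has fewer states. -/
def DFA.IsMinimal {α σ : Type} (M : DFA α σ) : Prop :=
  ∀ (σ' : Type) (_ : Finite σ') (M' : DFA α σ'), M'.accepts = M.accepts →
    Nat.card σ ≤ Nat.card σ'

/-- The átomaton of `L`: states are the atoms of `L`, the initial states are the initial atoms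
(those contained in `L`, i.e., with `L` occurring uncomplemented among their terms), the final
states are the atoms containing `ε` (there is exactly one such atom when `L ≠ ∅`), and the atom
`B` is an `a`-successor of the atom `A` iff `a·B ⊆ A`. -/
def atomaton {α : Type} (L : Language α) : NFA α {A : Language α // IsAtomOf L A} where
  step A a := {B | ∀ w ∈ B.1, a :: w ∈ A.1}
  start := {A | ∀ x ∈ A.1, x ∈ L}
  accept := {A | [] ∈ A.1}

theorem leftQuot_leftQuot {α : Type} (L : Language α) (w v : List α) :
    leftQuot (leftQuot L w) v = leftQuot L (w ++ v) :=
  Set.ext fun x => by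
    show w ++ (v ++ x) ∈ L ↔ (w ++ v) ++ x ∈ L
    rw [List.append_assoc]

theorem leftQuot_nil {α : Type} (L : Language α) : leftQuot L [] = L :=
  Set.ext fun _ => Iff.rfl

/-- The quotient DFA of `L`: states are the left quotients of `L`, the initial state is `L`
itself, the final states are the quotients containing `ε`, and `δ(K, a) = a⁻¹K`. -/
def quotDFA {α : Type} (L : Language α) : DFA α {K : Language α // K ∈ quots L} where
  step K a := ⟨leftQuot K.1 [a], by
    obtain ⟨w, hw⟩ := K.2
    exact ⟨w ++ [a], by rw [hw, leftQuot_leftQuot]⟩⟩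
  start := ⟨L, [], (leftQuot_nil L).symm⟩
  accept := {K | [] ∈ K.1}


section Aux

variable {α : Type} {L : Language α}

lemma quots_quot {K : Language α} (hK : K ∈ quots L) (w : List α) :
    leftQuot K w ∈ quots L := by
  obtain ⟨u, rfl⟩ := hK
  exact ⟨u ++ w, leftQuot_leftQuot L u w⟩

lemma atom_profile {A : Language α} (h : IsAtomOf L A) {x y : List α}
    (hx : x ∈ A) (hy : y ∈ A) {K : Language α} (hK : K ∈ quots L) : x ∈ K ↔ y ∈ K := by
  obtain ⟨-, S, -, hA⟩ := h
  rw [hA] at hx hy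
  rw [hx K hK, hy K hK]

lemma atom_mem_iff {A : Language α} (h : IsAtomOf L A) {x₀ : List α} (hx : x₀ ∈ A) (y : List α) :
    y ∈ A ↔ ∀ K ∈ quots L, (y ∈ K ↔ x₀ ∈ K) := by
  obtain ⟨-, S, -, hA⟩ := h
  rw [hA] at hx ⊢
  constructor
  · intro hy K hK; rw [hy K hK, hx K hK]
  · intro hy K hK; rw [hy K hK, hx K hK]

lemma rev_eval (L : Language α) (w : List α) :
    (quotDFA L).rev.eval w = {K | w.reverse ∈ K.1} := by
  induction w using List.reverseRec with
  | nil => rfl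
  | append_singleton w a ih =>
    rw [NFA.eval_append_singleton, ih]
    ext K
    show K ∈ NFA.stepSet _ _ _ ↔ _
    simp only [NFA.stepSet, Set.mem_iUnion]
    constructor
    · rintro ⟨q, hq, hKq⟩
      have : (quotDFA L).step K a = q := hKq
      have h2 : w.reverse ∈ (leftQuot K.1 [a] : Language α) := by
        rw [show (leftQuot K.1 [a] : Language α) = q.1 from congrArg Subtype.val this]
        exact hq
      show (w ++ [a]).reverse ∈ K.1
      rw [List.reverse_append]
      exact h2
    · intro hK
      refine ⟨(quotDFA L).step K a, ?_, rfl⟩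
      show w.reverse ∈ leftQuot K.1 [a]
      show [a] ++ w.reverse ∈ K.1
      rw [show (w ++ [a]).reverse = [a] ++ w.reverse from List.reverse_append (as := w) (bs := [a])] at hK
      exact hK

/-- The underlying set of `φ A` equals the profile of any element of `A`. -/
lemma phi_eq {A : Language α} (h : IsAtomOf L A) {x₀ : List α} (hx : x₀ ∈ A) :
    {K : {K : Language α // K ∈ quots L} | ∀ x ∈ A, x ∈ K.1} = {K | x₀ ∈ K.1} := by
  ext K
  constructor
  · intro hK; exact hK x₀ hx
  · intro hK x hxA; exact (atom_profile h hxA hx K.2).mpr hK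

end Aux

/-- The map `φ` assigning to each atom the set of quotients occurring
uncomplemented in it is an NFA isomorphism between the átomaton and `D^{R D R}` (the quotient
DFA reversed, determinized, and reversed again): a bijection of the state sets mapping initial
states onto initial states, final states onto final states, and commuting with the transition
functions. -/
theorem atomaton_iso_detrev {α : Type} [Finite α] {L : Language α} (hL : L.IsRegular)
    (hne : ∃ w, w ∈ L) :
    ∃ e : {A : Language α // IsAtomOf L A} ≃ (quotDFA L).rev.detStates,
      (∀ A, (e A).1 = {K : {K : Language α // K ∈ quots L} | ∀ x ∈ A.1, x ∈ K.1}) ∧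
      (∀ A, A ∈ (atomaton L).start ↔ e A ∈ (quotDFA L).rev.det.rev.start) ∧
      (∀ A, A ∈ (atomaton L).accept ↔ e A ∈ (quotDFA L).rev.det.rev.accept) ∧
      (∀ A B a, B ∈ (atomaton L).step A a ↔ e B ∈ (quotDFA L).rev.det.rev.step (e A) a) := by
  classical
  set f : {A : Language α // IsAtomOf L A} → (quotDFA L).rev.detStates := fun A =>
    ⟨{K : {K : Language α // K ∈ quots L} | ∀ x ∈ A.1, x ∈ K.1}, by
      obtain ⟨⟨x₀, hx₀⟩, -⟩ := A.2
      refine ⟨x₀.reverse, ?_⟩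
      rw [rev_eval, List.reverse_reverse, phi_eq A.2 hx₀]⟩ with hf
  have hinj : Function.Injective f := by
    rintro A B hAB
    obtain ⟨⟨x₀, hx₀⟩, -⟩ := A.2
    obtain ⟨⟨x₁, hx₁⟩, -⟩ := B.2
    have hsets : ({K : {K : Language α // K ∈ quots L} | x₀ ∈ K.1} : Set _)
        = {K | x₁ ∈ K.1} := by
      rw [← phi_eq A.2 hx₀, ← phi_eq B.2 hx₁]
      exact congrArg Subtype.val hAB
    have hprof : ∀ K ∈ quots L, (x₀ ∈ K ↔ x₁ ∈ K) := by
      intro K hK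
      exact Set.ext_iff.mp hsets ⟨K, hK⟩
    apply Subtype.ext
    ext y
    rw [atom_mem_iff A.2 hx₀ y, atom_mem_iff B.2 hx₁ y]
    constructor
    · intro hy K hK; rw [hy K hK, hprof K hK]
    · intro hy K hK; rw [hy K hK, ← hprof K hK]
  have hsurj : Function.Surjective f := by
    rintro ⟨S, w, hw⟩
    rw [rev_eval] at hw
    set v := w.reverse with hv
    have hA : IsAtomOf L {x | ∀ K ∈ quots L, (x ∈ K ↔ v ∈ K)} := by
      refine ⟨⟨v, fun K hK => Iff.rfl⟩, {K | K ∈ quots L ∧ v ∈ K}, fun K hK => hK.1, ?_⟩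
      ext x
      constructor
      · intro hx K hK
        rw [hx K hK]
        exact ⟨fun h => ⟨hK, h⟩, fun h => h.2⟩
      · intro hx K hK
        rw [hx K hK]
        exact ⟨fun h => h.2, fun h => ⟨hK, h⟩⟩
    refine ⟨⟨_, hA⟩, ?_⟩
    apply Subtype.ext
    show {K : {K : Language α // K ∈ quots L} | ∀ x ∈ _, x ∈ K.1} = S
    rw [phi_eq hA (fun K hK => Iff.rfl), ← hw]
  refine ⟨Equiv.ofBijective f ⟨hinj, hsurj⟩, fun A => rfl, ?_, ?_, ?_⟩
  · intro A
    constructor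
    · intro h
      exact ⟨(quotDFA L).start, rfl, h⟩
    · rintro ⟨p, hp, hpA⟩
      have : p = (quotDFA L).start := hp
      subst this
      exact hpA
  · intro A
    obtain ⟨⟨x₀, hx₀⟩, -⟩ := A.2
    constructor
    · intro h
      show _ = (quotDFA L).rev.det.start
      apply Subtype.ext
      show {K : {K : Language α // K ∈ quots L} | ∀ x ∈ A.1, x ∈ K.1} = {K | [] ∈ K.1}
      exact phi_eq A.2 h
    · intro h
      have hsets : ({K : {K : Language α // K ∈ quots L} | x₀ ∈ K.1} : Set _)
          = {K | [] ∈ K.1} := by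
        rw [← phi_eq A.2 hx₀]
        exact congrArg Subtype.val h
      rw [show A ∈ (atomaton L).accept ↔ [] ∈ A.1 from Iff.rfl,
        atom_mem_iff A.2 hx₀]
      intro K hK
      exact (Set.ext_iff.mp hsets ⟨K, hK⟩).symm
  · intro A B a
    obtain ⟨⟨x₀, hx₀⟩, -⟩ := A.2
    obtain ⟨⟨x₁, hx₁⟩, -⟩ := B.2
    have hstep : ((quotDFA L).rev.det.step (Equiv.ofBijective f ⟨hinj, hsurj⟩ B) a).1
        = {K : {K : Language α // K ∈ quots L} | ∀ x ∈ B.1, a :: x ∈ K.1} := by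
      show NFA.stepSet _ _ _ = _
      ext K
      simp only [NFA.stepSet, Set.mem_iUnion]
      constructor
      · rintro ⟨q, hq, hKq⟩
        have hq' : (quotDFA L).step K a = q := hKq
        intro x hx
        have : x ∈ (leftQuot K.1 [a] : Language α) := by
          rw [show (leftQuot K.1 [a] : Language α) = q.1 from congrArg Subtype.val hq']
          exact hq x hx
        exact this
      · intro hK
        refine ⟨(quotDFA L).step K a, ?_, rfl⟩
        intro x hx
        show [a] ++ x ∈ K.1
        exact hK x hx
    constructor
    · intro h
      show (quotDFA L).rev.det.step _ a = _
      apply Subtype.ext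
      rw [hstep]
      show _ = {K : {K : Language α // K ∈ quots L} | ∀ x ∈ A.1, x ∈ K.1}
      rw [phi_eq A.2 hx₀]
      ext K
      constructor
      · intro hK
        have : a :: x₁ ∈ K.1 := hK x₁ hx₁
        exact (atom_profile A.2 hx₀ (h x₁ hx₁) K.2).mpr this
      · intro hK x hx
        exact (atom_profile A.2 (h x hx) hx₀ K.2).mpr hK
    · intro h
      have heq : ({K : {K : Language α // K ∈ quots L} | ∀ x ∈ B.1, a :: x ∈ K.1} : Set _)
          = {K | x₀ ∈ K.1} := by
        rw [← hstep, ← phi_eq A.2 hx₀]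
        have h' : (quotDFA L).rev.det.step (Equiv.ofBijective f ⟨hinj, hsurj⟩ B) a
            = Equiv.ofBijective f ⟨hinj, hsurj⟩ A := h
        exact congrArg Subtype.val h'
      intro w hw
      show a :: w ∈ A.1
      rw [atom_mem_iff A.2 hx₀]
      intro K hK
      have hquot : leftQuot K [a] ∈ quots L := quots_quot hK [a]
      have hsame : ∀ x ∈ B.1, (a :: x ∈ K ↔ a :: x₁ ∈ K) := by
        intro x hx
        exact atom_profile B.2 hx hx₁ hquot
      have h1 : a :: w ∈ K ↔ a :: x₁ ∈ K := hsame w hw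
      have h2 : a :: x₁ ∈ K ↔ x₀ ∈ K := by
        have := Set.ext_iff.mp heq ⟨K, hK⟩
        constructor
        · intro hx1
          exact this.mp (fun x hx => (hsame x hx).mpr hx1)
        · intro hx0
          exact (hsame x₁ hx₁).mp (this.mpr hx0 x₁ hx₁)
      rw [h1, h2]
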